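/- Let 1 ≤ i ≤ n and set B_i := O(V_i) ⊗_{O(V_i)^{s_i}} O(V_i). Then there is an isomorphism of (O(Z),O(Z))-bimodules O(V_i) ⊗_{O(V_i)^{s_i}} O(V_i) ⊗_{O(V_i)^{s_i}} O(V_i) ≅ B_i ⊕ B_i, where the left and right O(Z)-actions are through the restriction O(Z) → O(V_i) on the outer factors. (This is the underlying ungraded form of the third Temperley–Lieb relation B_i ∗ B_i ≅ B_i ⊕ B_i[−2]; the second summand corresponds via multiplication by f_i to a copy of B_i shifted in degree by −2.) -/

import Mathlib

/-! Basic setup: type A_n geometric representation, Weyl lines, combinatorics. -/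

set_option linter.unusedSectionVars false
set_option synthInstance.maxHeartbeats 1000000
set_option maxHeartbeats 1000000

namespace TLpaper

/-- A permutation is a transposition. -/
def IsTransposition {α : Type} [DecidableEq α] (σ : Equiv.Perm α) : Prop :=
  ∃ a b, a ≠ b ∧ σ = Equiv.swap a b

variable (k : Type) [Field k] [CharZero k] (n : ℕ)

/-- The reflecting hyperplane of a permutation `t` inside `V = {x | ∑ x i = 0}`:
the set of points of `V` fixed by permuting the coordinates by `t`.  For a
transposition `t = (a b)` this is `{x ∈ V | x a = x b}`. -/
def Hyp (t : Equiv.Perm (Fin (n + 1))) : Set (Fin (n + 1) → k) :=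
  {x | (∑ i, x i) = 0 ∧ ∀ i, x (t i) = x i}

/-- A Weyl line: a one-dimensional linear subspace of `V` which is an
intersection of a (possibly empty) family of reflecting hyperplanes. -/
def IsWeylLine (L : Set (Fin (n + 1) → k)) : Prop :=
  (∃ v : Fin (n + 1) → k, v ≠ 0 ∧ L = Set.range fun c : k => c • v) ∧
  ∃ T : Set (Equiv.Perm (Fin (n + 1))),
    (∀ t ∈ T, IsTransposition t) ∧
    L = {x | (∑ i, x i) = 0} ∩ ⋂ t ∈ T, Hyp k n t

/-- `Z`: the union of all Weyl lines. -/
def ZZ : Set (Fin (n + 1) → k) := ⋃ L ∈ {L | IsWeylLine k n L}, L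

/-- `V_t`: the union of all Weyl lines transverse to `t` (i.e. not contained in `H_t`). -/
def Vt (t : Equiv.Perm (Fin (n + 1))) : Set (Fin (n + 1) → k) :=
  ⋃ L ∈ {L | IsWeylLine k n L ∧ ¬L ⊆ Hyp k n t}, L

open Fin.NatCast in
/-- The simple transposition `s_i = (i, i+1)` (0-indexed: it swaps coordinates
`i` and `i+1` of `Fin (n+1)`, for `i < n`). -/
def simple (i : ℕ) : Equiv.Perm (Fin (n + 1)) :=
  Equiv.swap (i : Fin (n + 1)) ((i + 1 : ℕ) : Fin (n + 1))

/-- `V_i := V_{s_i}`. -/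
def Vi (i : ℕ) : Set (Fin (n + 1) → k) := Vt k n (simple n i)

/-- The action of a permutation on a subset of `k^{n+1}` (permuting coordinates). -/
def permSet (σ : Equiv.Perm (Fin (n + 1))) (W : Set (Fin (n + 1) → k)) :
    Set (Fin (n + 1) → k) :=
  (fun x => x ∘ σ) '' W

/-- `i · W := V_i ∩ (W ∪ s_i (W))`. -/
def dotAct (i : ℕ) (W : Set (Fin (n + 1) → k)) : Set (Fin (n + 1) → k) :=
  Vi k n i ∩ (W ∪ permSet k n (simple n i) W)

/-- The set `W_{i_1 ⋯ i_m}` associated with a sequence of indices. -/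
def seqSet : List ℕ → Set (Fin (n + 1) → k)
  | [] => ZZ k n
  | [i] => Vi k n i
  | i :: j :: l => dotAct k n i (seqSet (j :: l))

/-- Membership in the family `𝒱_n`. -/
def memVn (W : Set (Fin (n + 1) → k)) : Prop :=
  ∃ l : List ℕ, l ≠ [] ∧ (∀ i ∈ l, i < n) ∧ W = seqSet k n l

/-- A set of pairwise commuting transpositions. -/
def CommTranspositions (Q : Set (Equiv.Perm (Fin (n + 1)))) : Prop :=
  (∀ t ∈ Q, IsTransposition t) ∧ ∀ t ∈ Q, ∀ t' ∈ Q, t * t' = t' * t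


/-! Coordinate rings of subvarieties of `k^{n+1}`. -/

noncomputable section

/-- The ring `O(X)` of regular functions on `X`: the quotient of the polynomial ring
`k[X_0, …, X_n]` by the vanishing ideal of `X`. -/
def O (X : Set (Fin (n + 1) → k)) : Type :=
  MvPolynomial (Fin (n + 1)) k ⧸ MvPolynomial.vanishingIdeal k X

instance (X : Set (Fin (n + 1) → k)) : CommRing (O k n X) :=
  inferInstanceAs (CommRing (MvPolynomial (Fin (n + 1)) k ⧸ MvPolynomial.vanishingIdeal k X))

theorem vanishingIdeal_anti {X Y : Set (Fin (n + 1) → k)} (h : X ⊆ Y) :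
    MvPolynomial.vanishingIdeal k Y ≤ MvPolynomial.vanishingIdeal k X := fun p hp => by
  rw [MvPolynomial.mem_vanishingIdeal_iff] at hp ⊢
  exact fun x hx => hp x (h hx)

/-- The (surjective) restriction homomorphism `O(Y) → O(X)` for `X ⊆ Y`. -/
def res {X Y : Set (Fin (n + 1) → k)} (h : X ⊆ Y) : O k n Y →+* O k n X :=
  Ideal.Quotient.factor (vanishingIdeal_anti k n h)

open Classical in
/-- The ring endomorphism of `O(X)` induced by a permutation `σ` of the coordinates
(when `X` is `σ`-stable; the definition branches on this (true, in our uses)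
stability condition to be total). -/
def permO (σ : Equiv.Perm (Fin (n + 1))) (X : Set (Fin (n + 1) → k)) :
    O k n X →+* O k n X :=
  if h : ∀ x ∈ X, x ∘ σ ∈ X then
    Ideal.Quotient.lift _
      ((Ideal.Quotient.mk _).comp (MvPolynomial.rename (R := k) ⇑σ).toRingHom)
      (fun p hp => by
        have hmem : (MvPolynomial.rename (R := k) ⇑σ) p ∈
            MvPolynomial.vanishingIdeal k X := by
          rw [MvPolynomial.mem_vanishingIdeal_iff]
          intro x hx
          rw [MvPolynomial.aeval_rename]
          exact (MvPolynomial.mem_vanishingIdeal_iff.1 hp) _ (h x hx)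
        exact Ideal.Quotient.eq_zero_iff_mem.2 hmem)
  else RingHom.id _

/-- The fixed subalgebra `O(V_i)^{s_i}` of `O(V_i)` under the automorphism induced
by the simple transposition `s_i`. -/
def fixedO (i : ℕ) : Subring (O k n (Vi k n i)) :=
  RingHom.eqLocus (permO k n (simple n i) (Vi k n i)) (RingHom.id _)

open Fin.NatCast in
/-- The image `f_i` of `X_i − X_{i+1}` in the coordinate ring `O(X)`. -/
def fbar (X : Set (Fin (n + 1) → k)) (i : ℕ) : O k n X :=
  Ideal.Quotient.mk _
    (MvPolynomial.X (i : Fin (n + 1)) - MvPolynomial.X ((i + 1 : ℕ) : Fin (n + 1)))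

theorem Vt_subset_ZZ (t : Equiv.Perm (Fin (n + 1))) : Vt k n t ⊆ ZZ k n := by
  refine Set.iUnion₂_subset fun L hL => ?_
  exact Set.subset_iUnion₂ (s := fun L _ => L) L hL.1

theorem Vi_subset_ZZ (i : ℕ) : Vi k n i ⊆ ZZ k n := Vt_subset_ZZ k n _

theorem seqSet_subset_ZZ : ∀ l : List ℕ, seqSet k n l ⊆ ZZ k n
  | [] => subset_rfl
  | [_] => Vi_subset_ZZ k n _
  | _ :: _ :: _ => Set.inter_subset_left.trans (Vi_subset_ZZ k n _)

end

/-! Tensor products of commutative rings along ring homomorphisms. -/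

noncomputable section RTensor

open scoped TensorProduct

variable (R A B : Type) [CommRing R] [CommRing A] [CommRing B]
variable (f : R →+* A) (g : R →+* B)

/-- The tensor product `A ⊗_R B` of two commutative rings along the ring
homomorphisms `f : R → A` and `g : R → B` (which define the `R`-module
structures); it is again a commutative ring. -/
def RTensor : Type :=
  letI := f.toAlgebra
  letI := g.toAlgebra
  A ⊗[R] B

instance : CommRing (RTensor R A B f g) :=
  letI := f.toAlgebra
  letI := g.toAlgebra
  Algebra.TensorProduct.instCommRing

/-- The inclusion `a ↦ a ⊗ 1` of the left factor. -/
def RTensor.inl : A →+* RTensor R A B f g :=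
  letI := f.toAlgebra
  letI := g.toAlgebra
  Algebra.TensorProduct.includeLeftRingHom

/-- The inclusion `b ↦ 1 ⊗ b` of the right factor. -/
def RTensor.inr : B →+* RTensor R A B f g :=
  letI := f.toAlgebra
  letI := g.toAlgebra
  Algebra.TensorProduct.includeRight.toRingHom

end RTensor

open Fin.NatCast

open MvPolynomial in
theorem sub_dvd_sub_subst (a b : Fin (n + 1)) (p : MvPolynomial (Fin (n + 1)) k) :
    (X b - X a) ∣
      (p - aeval (fun j => if j = b then (X a : MvPolynomial (Fin (n + 1)) k) else X j) p) := by
  induction p using MvPolynomial.induction_on with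
  | C c => simp
  | add p q hp hq =>
      rw [map_add]
      have h : p + q - (aeval (fun j => if j = b then (X a : MvPolynomial (Fin (n + 1)) k) else X j) p
          + aeval (fun j => if j = b then (X a : MvPolynomial (Fin (n + 1)) k) else X j) q)
          = (p - aeval (fun j => if j = b then (X a : MvPolynomial (Fin (n + 1)) k) else X j) p)
          + (q - aeval (fun j => if j = b then (X a : MvPolynomial (Fin (n + 1)) k) else X j) q) := by ring
      rw [h]; exact dvd_add hp hq
  | mul_X p j hp =>
      rw [map_mul, aeval_X]
      by_cases hj : j = b
      · subst hj
        rw [if_pos rfl]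
        have h : p * X j - aeval (fun j' => if j' = j then (X a : MvPolynomial (Fin (n + 1)) k) else X j') p * X a
            = p * (X j - X a) + X a * (p - aeval (fun j' => if j' = j then (X a : MvPolynomial (Fin (n + 1)) k) else X j') p) := by ring
        rw [h]
        exact dvd_add (dvd_mul_left _ _) ((hp).mul_left _)
      · rw [if_neg hj]
        have h : p * X j - aeval (fun j' => if j' = b then (X a : MvPolynomial (Fin (n + 1)) k) else X j') p * X j
            = (p - aeval (fun j' => if j' = b then (X a : MvPolynomial (Fin (n + 1)) k) else X j') p) * X j := by ring
        rw [h]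
        exact hp.mul_right _

open MvPolynomial in
theorem antisym_dvd (a b : Fin (n + 1)) (hab : a ≠ b) (p : MvPolynomial (Fin (n + 1)) k)
    (hp : rename ⇑(Equiv.swap a b) p = -p) :
    (X a - X b) ∣ p := by
  have hcomp : ((fun j => if j = b then (X a : MvPolynomial (Fin (n + 1)) k) else X j) ∘ ⇑(Equiv.swap a b))
      = (fun j => if j = b then (X a : MvPolynomial (Fin (n + 1)) k) else X j) := by
    funext j
    rcases eq_or_ne j a with rfl | hja
    · simp [Equiv.swap_apply_left, hab]
    rcases eq_or_ne j b with rfl | hjb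
    · simp [Equiv.swap_apply_right, hab]
    · simp [Equiv.swap_apply_of_ne_of_ne hja hjb]
  have h0 : aeval (fun j => if j = b then (X a : MvPolynomial (Fin (n + 1)) k) else X j) p = 0 := by
    have h1 := congrArg (aeval (fun j => if j = b then (X a : MvPolynomial (Fin (n + 1)) k) else X j)) hp
    rw [aeval_rename, hcomp, map_neg] at h1
    have h2 : (2 : MvPolynomial (Fin (n + 1)) k) * aeval (fun j => if j = b then (X a : MvPolynomial (Fin (n + 1)) k) else X j) p = 0 := by
      linear_combination h1
    rcases mul_eq_zero.mp h2 with h | h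
    · exact absurd h two_ne_zero
    · exact h
  have hd := sub_dvd_sub_subst k n a b p
  rw [h0, sub_zero] at hd
  rw [show (X a - X b : MvPolynomial (Fin (n + 1)) k) = -(X b - X a) by ring]
  exact (neg_dvd).mpr hd


/-! ### Geometry of Weyl lines -/

theorem comp_mem_Hyp_iff (σ t : Equiv.Perm (Fin (n + 1))) (x : Fin (n + 1) → k) :
    (x ∘ ⇑σ) ∈ Hyp k n t ↔ x ∈ Hyp k n (σ * t * σ⁻¹) := by
  unfold Hyp
  simp only [Set.mem_setOf_eq, Function.comp_apply, Equiv.Perm.coe_mul]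
  constructor
  · rintro ⟨h1, h2⟩
    refine ⟨by rwa [Equiv.sum_comp σ x] at h1, fun j => ?_⟩
    simpa using h2 (σ⁻¹ j)
  · rintro ⟨h1, h2⟩
    refine ⟨by rw [Equiv.sum_comp σ x]; exact h1, fun j => ?_⟩
    simpa using h2 (σ j)

theorem comp_simple_mem_Vi (i : ℕ) : ∀ x ∈ Vi k n i, x ∘ ⇑(simple n i) ∈ Vi k n i := by
  intro x hx
  obtain ⟨L, hL, hxL⟩ := Set.mem_iUnion₂.mp hx
  obtain ⟨hW, hns⟩ := hL
  have hσinv : (simple n i)⁻¹ = simple n i := Equiv.swap_inv _ _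
  have hcc : ∀ y : Fin (n + 1) → k, (y ∘ ⇑(simple n i)) ∘ ⇑(simple n i) = y := by
    intro y; funext j
    simp [simple, Function.comp, Equiv.swap_apply_self]
  refine Set.mem_iUnion₂.mpr ⟨(fun z => z ∘ ⇑(simple n i)) ⁻¹' L, ⟨?_, ?_⟩, ?_⟩
  · -- Weyl line
    obtain ⟨⟨v, hv0, hvr⟩, ⟨T, hT, hTL⟩⟩ := hW
    constructor
    · refine ⟨v ∘ ⇑(simple n i), ?_, ?_⟩
      · intro h
        apply hv0
        have : (v ∘ ⇑(simple n i)) ∘ ⇑(simple n i) = (0 : Fin (n+1) → k) ∘ ⇑(simple n i) := by rw [h]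
        rw [hcc] at this
        simpa using this
      · ext z
        simp only [Set.mem_preimage, hvr, Set.mem_range]
        constructor
        · rintro ⟨c, hc⟩
          refine ⟨c, funext fun j => ?_⟩
          have hj := congrFun hc ((simple n i) j)
          simpa [simple, Pi.smul_apply, smul_eq_mul, Equiv.swap_apply_self, Function.comp] using hj
        · rintro ⟨c, rfl⟩
          refine ⟨c, funext fun j => ?_⟩
          simp [simple, Pi.smul_apply, smul_eq_mul, Equiv.swap_apply_self, Function.comp]
    · refine ⟨(fun t => simple n i * t * (simple n i)⁻¹) '' T, ?_, ?_⟩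
      · rintro _ ⟨t, ht, rfl⟩
        obtain ⟨aa, bb, hne, rfl⟩ := hT t ht
        exact ⟨simple n i aa, simple n i bb, (simple n i).injective.ne hne,
          (Equiv.swap_apply_apply (simple n i) aa bb).symm⟩
      · ext z
        simp only [Set.mem_preimage, Set.mem_inter_iff, Set.mem_setOf_eq, Set.mem_iInter]
        rw [hTL]
        simp only [Set.mem_inter_iff, Set.mem_setOf_eq, Set.mem_iInter]
        constructor
        · rintro ⟨h1, h2⟩
          refine ⟨?_, ?_⟩
          · simp only [Function.comp_apply] at h1
            rwa [Equiv.sum_comp (simple n i) z] at h1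
          · rintro t' ht'
            obtain ⟨t, ht, rfl⟩ := ht'
            exact (comp_mem_Hyp_iff k n (simple n i) t z).mp (h2 t ht)
        · rintro ⟨h1, h2⟩
          refine ⟨?_, fun t ht => ?_⟩
          · simp only [Function.comp_apply]
            rw [Equiv.sum_comp (simple n i) z]; exact h1
          · exact (comp_mem_Hyp_iff k n (simple n i) t z).mpr (h2 _ ⟨t, ht, rfl⟩)
  · -- not contained in the hyperplane
    obtain ⟨y, hyL, hyH⟩ := Set.not_subset.mp hns
    refine Set.not_subset.mpr ⟨y ∘ ⇑(simple n i), by simpa [Set.mem_preimage, hcc] using hyL, fun h => hyH ?_⟩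
    have := (comp_mem_Hyp_iff k n (simple n i) (simple n i) y).mp h
    rwa [mul_inv_cancel_right] at this
  · simpa [Set.mem_preimage, hcc] using hxL

open MvPolynomial in
theorem eval_vanish_of_mul (i : ℕ) (hi : i < n) (h : MvPolynomial (Fin (n + 1)) k)
    (hh : ∀ y ∈ Vi k n i, eval y (h * (X (i : Fin (n + 1)) - X ((i + 1 : ℕ) : Fin (n + 1)))) = 0) :
    ∀ x ∈ Vi k n i, eval x h = 0 := by
  intro x hx
  obtain ⟨L, hL, hxL⟩ := Set.mem_iUnion₂.mp hx
  obtain ⟨hW, hns⟩ := hL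
  obtain ⟨⟨v, hv0, hvr⟩, ⟨T, hT, hTL⟩⟩ := hW
  -- the second factor is nonzero somewhere on L
  obtain ⟨y, hyL, hyH⟩ := Set.not_subset.mp hns
  have hysum : (∑ j, y j) = 0 := by
    rw [hTL] at hyL; exact hyL.1
  have hyab : y (i : Fin (n + 1)) ≠ y ((i + 1 : ℕ) : Fin (n + 1)) := by
    intro hcon
    apply hyH
    refine ⟨hysum, fun j => ?_⟩
    rcases eq_or_ne j (i : Fin (n + 1)) with rfl | hja
    · simpa [simple, Equiv.swap_apply_left] using hcon.symm
    rcases eq_or_ne j ((i + 1 : ℕ) : Fin (n + 1)) with rfl | hjb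
    · simpa [simple, Equiv.swap_apply_right] using hcon
    · rw [show (simple n i) j = j from Equiv.swap_apply_of_ne_of_ne hja hjb]
  obtain ⟨c₀, hc₀⟩ : ∃ c, c • v = y := by rw [hvr] at hyL; exact hyL
  have hvab : v (i : Fin (n + 1)) ≠ v ((i + 1 : ℕ) : Fin (n + 1)) := by
    intro hc
    apply hyab
    rw [← hc₀]
    simp [Pi.smul_apply, hc]
  -- x lies on L
  obtain ⟨c, hc⟩ : ∃ c, c • v = x := by rw [hvr] at hxL; exact hxL
  -- one-variable polynomial
  have hpoly : ∀ (p : MvPolynomial (Fin (n + 1)) k) (t : k),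
      Polynomial.eval t (aeval (fun j => Polynomial.C (v j) * Polynomial.X) p) = eval (t • v) p := by
    intro p t
    induction p using MvPolynomial.induction_on with
    | C c => simp
    | add p q hp hq => simp [map_add, hp, hq]
    | mul_X p j hp =>
        rw [map_mul, aeval_X, map_mul, eval_X, Polynomial.eval_mul, Polynomial.eval_mul,
          Polynomial.eval_C, Polynomial.eval_X, hp, Pi.smul_apply, smul_eq_mul]
        ring
  have hmemL : ∀ t : k, t • v ∈ Vi k n i := by
    intro t
    refine Set.mem_iUnion₂.mpr ⟨L, ⟨⟨⟨v, hv0, hvr⟩, ⟨T, hT, hTL⟩⟩, hns⟩, ?_⟩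
    rw [hvr]; exact ⟨t, rfl⟩
  have hroot : ∀ t : k, t ≠ 0 →
      Polynomial.IsRoot (aeval (fun j => Polynomial.C (v j) * Polynomial.X) h) t := by
    intro t ht
    have h1 := hh (t • v) (hmemL t)
    rw [map_mul, map_sub, eval_X, eval_X] at h1
    have h2 : (t • v) (i : Fin (n + 1)) - (t • v) ((i + 1 : ℕ) : Fin (n + 1))
        = t * (v (i : Fin (n + 1)) - v ((i + 1 : ℕ) : Fin (n + 1))) := by
      simp [Pi.smul_apply]; ring
    rw [h2] at h1
    rcases mul_eq_zero.mp h1 with h3 | h3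
    · unfold Polynomial.IsRoot
      rw [hpoly h t]
      exact h3
    · exact absurd h3 (mul_ne_zero ht (sub_ne_zero.mpr hvab))
  have hQ0 : aeval (fun j => Polynomial.C (v j) * Polynomial.X) h = 0 := by
    apply Polynomial.eq_zero_of_infinite_isRoot
    apply Set.Infinite.mono (s := ({0}ᶜ : Set k))
    · intro t ht
      exact hroot t ht
    · exact (Set.finite_singleton 0).infinite_compl
  have := hpoly h c
  rw [hQ0, hc] at this
  simpa using this.symm

noncomputable section ORing

open MvPolynomial

theorem permO_mk {σ : Equiv.Perm (Fin (n + 1))} {X : Set (Fin (n + 1) → k)}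
    (h : ∀ x ∈ X, x ∘ ⇑σ ∈ X) (p : MvPolynomial (Fin (n + 1)) k) :
    permO k n σ X (Ideal.Quotient.mk (vanishingIdeal k X) p)
      = Ideal.Quotient.mk (vanishingIdeal k X) (rename ⇑σ p) := by
  unfold permO
  exact (congrArg (fun φ : O k n X →+* O k n X => φ (Ideal.Quotient.mk (vanishingIdeal k X) p))
    (dif_pos h)).trans (Ideal.Quotient.lift_mk _ _ _)

theorem mk_C_half_mul (X : Set (Fin (n + 1) → k)) :
    (Ideal.Quotient.mk (vanishingIdeal k X) (C (2⁻¹ : k))) * 2 = 1 := by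
  rw [show (2 : MvPolynomial (Fin (n + 1)) k ⧸ vanishingIdeal k X)
      = Ideal.Quotient.mk (vanishingIdeal k X) (2 : MvPolynomial (Fin (n + 1)) k) from
      (map_ofNat _ 2).symm, ← map_mul,
    show (2 : MvPolynomial (Fin (n + 1)) k) = C (2 : k) from (map_ofNat C 2).symm,
    ← C_mul, inv_mul_cancel₀ (two_ne_zero), C_1, map_one]

variable (i : ℕ)

theorem coe_ne (hi : i < n) : (i : Fin (n + 1)) ≠ ((i + 1 : ℕ) : Fin (n + 1)) := by
  intro h
  have := congrArg Fin.val h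
  rw [Fin.val_cast_of_lt (by omega), Fin.val_cast_of_lt (by omega)] at this
  omega

theorem swap_comp_self :
    (⇑(simple n i) ∘ ⇑(simple n i)) = (id : Fin (n + 1) → Fin (n + 1)) :=
  funext fun j => Equiv.swap_apply_self _ _ j

theorem hss_O : ∀ a : O k n (Vi k n i),
    permO k n (simple n i) (Vi k n i) (permO k n (simple n i) (Vi k n i) a) = a := by
  intro a
  obtain ⟨p, rfl⟩ := Ideal.Quotient.mk_surjective (I := vanishingIdeal k (Vi k n i)) a
  rw [permO_mk k n (comp_simple_mem_Vi k n i), permO_mk k n (comp_simple_mem_Vi k n i),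
    rename_rename, swap_comp_self, rename_id, AlgHom.id_apply]

theorem hsf_O (hi : i < n) :
    permO k n (simple n i) (Vi k n i) (fbar k n (Vi k n i) i) = -(fbar k n (Vi k n i) i) := by
  unfold fbar
  rw [permO_mk k n (comp_simple_mem_Vi k n i), map_sub, rename_X, rename_X,
    show (simple n i) (i : Fin (n + 1)) = ((i + 1 : ℕ) : Fin (n + 1)) from
    Equiv.swap_apply_left _ _,
    show (simple n i) ((i + 1 : ℕ) : Fin (n + 1)) = (i : Fin (n + 1)) from
    Equiv.swap_apply_right _ _,
    show (X ((i+1:ℕ) : Fin (n+1)) - X (i : Fin (n+1)) : MvPolynomial (Fin (n+1)) k)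
      = -(X (i : Fin (n+1)) - X ((i+1:ℕ) : Fin (n+1))) from by ring, map_neg]
  rfl

theorem half_O : ∃ u : fixedO k n i, (u : O k n (Vi k n i)) * 2 = 1 := by
  refine ⟨⟨Ideal.Quotient.mk (vanishingIdeal k (Vi k n i)) (C (2⁻¹ : k)), ?_⟩, ?_⟩
  · show permO k n (simple n i) (Vi k n i) _ = _
    rw [permO_mk k n (comp_simple_mem_Vi k n i), rename_C]
    rfl
  · exact mk_C_half_mul k n (Vi k n i)

theorem hdvd_O (hi : i < n) : ∀ a : O k n (Vi k n i),
    permO k n (simple n i) (Vi k n i) a = -a →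
    ∃ r : fixedO k n i, a = (r : O k n (Vi k n i)) * fbar k n (Vi k n i) i := by
  intro a hsa
  obtain ⟨p₀, rfl⟩ := Ideal.Quotient.mk_surjective (I := vanishingIdeal k (Vi k n i)) a
  have hab := coe_ne n i hi
  -- the globally antisymmetrized representative
  set p : MvPolynomial (Fin (n + 1)) k
    := C (2⁻¹ : k) * (p₀ - rename ⇑(simple n i) p₀) with hpdef
  have hmkren : Ideal.Quotient.mk (vanishingIdeal k (Vi k n i)) (rename ⇑(simple n i) p₀)
      = -(Ideal.Quotient.mk (vanishingIdeal k (Vi k n i)) p₀) := by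
    rw [← permO_mk k n (comp_simple_mem_Vi k n i)]; exact hsa
  have hmkp : Ideal.Quotient.mk (vanishingIdeal k (Vi k n i)) p
      = Ideal.Quotient.mk (vanishingIdeal k (Vi k n i)) p₀ := by
    rw [hpdef, map_mul, map_sub, hmkren, sub_neg_eq_add]
    have h2 := mk_C_half_mul k n (Vi k n i)
    calc Ideal.Quotient.mk (vanishingIdeal k (Vi k n i)) (C (2⁻¹:k))
          * (Ideal.Quotient.mk (vanishingIdeal k (Vi k n i)) p₀
            + Ideal.Quotient.mk (vanishingIdeal k (Vi k n i)) p₀)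
        = (Ideal.Quotient.mk (vanishingIdeal k (Vi k n i)) (C (2⁻¹:k)) * 2)
          * Ideal.Quotient.mk (vanishingIdeal k (Vi k n i)) p₀ := by ring
      _ = Ideal.Quotient.mk (vanishingIdeal k (Vi k n i)) p₀ := by rw [h2, one_mul]
  have hpanti : rename ⇑(simple n i) p = -p := by
    rw [hpdef, map_mul, map_sub, rename_C, rename_rename, swap_comp_self, rename_id, AlgHom.id_apply]
    ring
  obtain ⟨h, hph⟩ := antisym_dvd k n (i : Fin (n + 1)) ((i + 1 : ℕ) : Fin (n + 1)) hab p
    (by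
      rw [show Equiv.swap (i : Fin (n + 1)) ((i + 1 : ℕ) : Fin (n + 1)) = simple n i from rfl]
      exact hpanti)
  have hXne : (X (i : Fin (n + 1)) - X ((i + 1 : ℕ) : Fin (n + 1)) : MvPolynomial (Fin (n + 1)) k) ≠ 0 := by
    intro hz
    exact hab (MvPolynomial.X_injective (sub_eq_zero.mp hz))
  have hren : rename ⇑(simple n i) h = h := by
    have h1 := hpanti
    rw [hph, map_mul, map_sub, rename_X, rename_X,
      show (simple n i) (i : Fin (n + 1)) = ((i + 1 : ℕ) : Fin (n + 1)) from
        Equiv.swap_apply_left _ _,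
      show (simple n i) ((i + 1 : ℕ) : Fin (n + 1)) = (i : Fin (n + 1)) from
        Equiv.swap_apply_right _ _] at h1
    have h2 : (X (i : Fin (n + 1)) - X ((i + 1 : ℕ) : Fin (n + 1)) : MvPolynomial (Fin (n + 1)) k)
        * rename ⇑(simple n i) h
        = (X (i : Fin (n + 1)) - X ((i + 1 : ℕ) : Fin (n + 1))) * h := by
      linear_combination (-1 : MvPolynomial (Fin (n + 1)) k) * h1
    exact mul_left_cancel₀ hXne h2
  refine ⟨⟨Ideal.Quotient.mk (vanishingIdeal k (Vi k n i)) h, ?_⟩, ?_⟩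
  · show permO k n (simple n i) (Vi k n i) _ = _
    rw [permO_mk k n (comp_simple_mem_Vi k n i), hren]
    rfl
  · have hgoal : Ideal.Quotient.mk (vanishingIdeal k (Vi k n i)) p₀
        = Ideal.Quotient.mk (vanishingIdeal k (Vi k n i)) h
          * Ideal.Quotient.mk (vanishingIdeal k (Vi k n i))
            (X (i : Fin (n + 1)) - X ((i + 1 : ℕ) : Fin (n + 1))) := by
      rw [← map_mul, ← hmkp, hph]
      congr 1
      ring
    exact hgoal

theorem hnzd_O (hi : i < n) : ∀ r : fixedO k n i,
    (r : O k n (Vi k n i)) * fbar k n (Vi k n i) i = 0 → r = 0 := by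
  intro r hr
  obtain ⟨h, hh⟩ := Ideal.Quotient.mk_surjective (I := vanishingIdeal k (Vi k n i))
    (r : O k n (Vi k n i))
  have h0 : Ideal.Quotient.mk (vanishingIdeal k (Vi k n i))
      (h * (X (i : Fin (n + 1)) - X ((i + 1 : ℕ) : Fin (n + 1)))) = 0 := by
    rw [map_mul, hh]
    exact hr
  have hvan := (Ideal.Quotient.eq_zero_iff_mem).mp h0
  rw [mem_vanishingIdeal_iff] at hvan
  have hzero : ∀ x ∈ Vi k n i, eval x h = 0 :=
    eval_vanish_of_mul k n i hi h hvan
  have : Ideal.Quotient.mk (vanishingIdeal k (Vi k n i)) h = 0 := by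
    rw [Ideal.Quotient.eq_zero_iff_mem, mem_vanishingIdeal_iff]
    exact hzero
  have hr0 : (r : O k n (Vi k n i)) = 0 := by rw [← hh, this]; rfl
  exact Subtype.ext hr0

end ORing

/-! ### The abstract form of the third Temperley–Lieb relation -/

noncomputable section AbsTL


open scoped TensorProduct

variable (R A : Type) [CommRing R] [CommRing A] (ι : R →+* A)

set_option maxHeartbeats 4000000 in
theorem abstract_third_rel (s : A →+* A) (f : A)
    (hinv : ∀ r, s (ι r) = ι r)
    (hsec : ∀ a, s a = a → ∃ r, ι r = a)
    (hinj : Function.Injective ι)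
    (hss : ∀ a, s (s a) = a)
    (hsf : s f = -f)
    (hhalf : ∃ u : R, ι u * 2 = 1)
    (hdvd : ∀ a, s a = -a → ∃ r, a = ι r * f)
    (hnzd : ∀ r : R, ι r * f = 0 → r = 0) :
    ∃ e : RTensor R (RTensor R A A ι ι) A ((RTensor.inr R A A ι ι).comp ι) ι ≃+
        RTensor R A A ι ι × RTensor R A A ι ι,
      (∀ (α : A) (x : RTensor R (RTensor R A A ι ι) A ((RTensor.inr R A A ι ι).comp ι) ι),
          e (RTensor.inl R (RTensor R A A ι ι) A ((RTensor.inr R A A ι ι).comp ι) ι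
              (RTensor.inl R A A ι ι α) * x)
            = (RTensor.inl R A A ι ι α, RTensor.inl R A A ι ι α) * e x) ∧
      (∀ (α : A) (x : RTensor R (RTensor R A A ι ι) A ((RTensor.inr R A A ι ι).comp ι) ι),
          e (x * RTensor.inr R (RTensor R A A ι ι) A ((RTensor.inr R A A ι ι).comp ι) ι α)
            = e x * (RTensor.inr R A A ι ι α, RTensor.inr R A A ι ι α)) := by
  obtain ⟨u, hu⟩ := hhalf
  letI : Algebra R A := ι.toAlgebra
  letI : Algebra R (RTensor R A A ι ι) := ((RTensor.inr R A A ι ι).comp ι).toAlgebra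
  have hsmA : ∀ (r : R) (a : A), r • a = ι r * a := fun r a => by
    rw [Algebra.smul_def, RingHom.algebraMap_toAlgebra]
  have hfiBi : ∀ r : R, ((RTensor.inr R A A ι ι).comp ι) r = (1 : A) ⊗ₜ[R] (ι r) := fun r => rfl
  have hsmB : ∀ (r : R) (x : RTensor R A A ι ι),
      r • x = (((RTensor.inr R A A ι ι).comp ι) r) * x := fun r x => by
    rw [Algebra.smul_def, RingHom.algebraMap_toAlgebra]
  have hinl1 : ∀ α : A, RTensor.inl R A A ι ι α = (α ⊗ₜ[R] (1 : A) : RTensor R A A ι ι) :=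
    fun α => rfl
  have hinr1 : ∀ α : A, RTensor.inr R A A ι ι α = ((1 : A) ⊗ₜ[R] α : RTensor R A A ι ι) :=
    fun α => rfl
  -- decomposition operators
  have hplus : ∀ b : A, s (ι u * (b + s b)) = ι u * (b + s b) := fun b => by
    rw [map_mul, map_add, hinv, hss, add_comm]
  have hminus : ∀ b : A, s (ι u * (b - s b)) = -(ι u * (b - s b)) := fun b => by
    rw [map_mul, map_sub, hinv, hss]; ring
  choose P hP using fun b => hsec _ (hplus b)
  choose Q hQ using fun b => hdvd _ (hminus b)
  have hPQ : ∀ b, ι (P b) + ι (Q b) * f = b := fun b => by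
    rw [hP, ← hQ]
    have h1 : ι u * (b + s b) + ι u * (b - s b) = (ι u * 2) * b := by ring
    rw [h1, hu, one_mul]
  have hPa : ∀ b c, P (b + c) = P b + P c := fun b c => hinj (by
    rw [map_add ι, hP, hP, hP, map_add s]; ring)
  have hQa : ∀ b c, Q (b + c) = Q b + Q c := fun b c => by
    have h1 : ι (Q (b + c) - (Q b + Q c)) * f = 0 := by
      rw [map_sub, map_add, sub_mul, add_mul, ← hQ, ← hQ, ← hQ, map_add]
      ring
    exact sub_eq_zero.mp (hnzd _ h1)
  have hPm : ∀ (r : R) b, P (ι r * b) = r * P b := fun r b => hinj (by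
    have hs1 : s (ι r * b) = ι r * s b := by rw [map_mul, hinv]
    rw [hP, hs1, map_mul ι, hP]; ring)
  have hQm : ∀ (r : R) b, Q (ι r * b) = r * Q b := fun r b => by
    have hs1 : s (ι r * b) = ι r * s b := by rw [map_mul, hinv]
    have h1 : ι (Q (ι r * b) - r * Q b) * f = 0 := by
      rw [map_sub, sub_mul, map_mul, mul_assoc, ← hQ, ← hQ, hs1]
      ring
    exact sub_eq_zero.mp (hnzd _ h1)
  -- special values
  have hP1 : ι (P 1) = 1 := by
    rw [hP, map_one, show (1 : A) + 1 = 2 from one_add_one_eq_two]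
    exact hu
  have hQ1 : Q 1 = 0 := by
    refine hnzd _ ?_
    rw [← hQ, map_one, sub_self, mul_zero]
  have hPf : ι (P f) = 0 := by
    rw [hP, hsf, add_neg_cancel, mul_zero]
  have hQf : Q f = 1 := by
    have h1 : ι (Q f - 1) * f = 0 := by
      rw [map_sub, sub_mul, ← hQ, map_one, one_mul, hsf, sub_neg_eq_add,
        show ι u * (f + f) = (ι u * 2) * f from by ring, hu, one_mul, sub_self]
    exact sub_eq_zero.mp (hnzd _ h1)
  -- the component map on the middle factor
  let π : RTensor R A A ι ι →+ A × A := TensorProduct.liftAddHom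
    (AddMonoidHom.mk' (fun a => AddMonoidHom.mk'
        (fun b => ((a * ι (P b), a * ι (Q b)) : A × A))
        (fun b c => by
          rw [hPa, hQa, map_add, map_add, mul_add, mul_add, Prod.mk_add_mk]))
      (fun a a' => AddMonoidHom.ext fun b => by
        simp only [AddMonoidHom.add_apply, AddMonoidHom.mk'_apply]
        erw [Prod.mk_add_mk, add_mul, add_mul]))
    (fun r a b => by
      simp only [AddMonoidHom.mk'_apply]
      erw [hsmA, hsmA, hPm, hQm, map_mul, map_mul]
      exact Prod.ext (by ring) (by ring))
  have hπt : ∀ a b : A, π (a ⊗ₜ[R] b) = (a * ι (P b), a * ι (Q b)) :=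
    fun a b => TensorProduct.liftAddHom_tmul _ _ a b
  -- scalar moves in the middle tensor factor
  have hmulT : ∀ (r : R) (a c : A), ((a * ι r) ⊗ₜ[R] c : RTensor R A A ι ι)
      = a ⊗ₜ[R] (ι r * c) := fun r a c => by
    erw [show a * ι r = r • a from by erw [hsmA]; ring, TensorProduct.smul_tmul, hsmA]
  have hmulT' : ∀ (r : R) (a c : A), ((ι r * a) ⊗ₜ[R] c : RTensor R A A ι ι)
      = a ⊗ₜ[R] (ι r * c) := fun r a c => by
    erw [show ι r * a = a * ι r from mul_comm _ _, hmulT]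
  have hinlr : ∀ r : R, RTensor.inl R A A ι ι (ι r) = ((RTensor.inr R A A ι ι).comp ι) r :=
    fun r => by
      erw [hinl1, show (ι r : A) = r • (1 : A) from by erw [hsmA, mul_one],
        TensorProduct.smul_tmul, hsmA, mul_one, hfiBi]
  -- behaviour of π under middle-scalar multiplication
  have hπs : ∀ (r : R) (x : RTensor R A A ι ι),
      π ((((RTensor.inr R A A ι ι).comp ι) r) * x)
        = (ι r * (π x).1, ι r * (π x).2) := by
    intro r x
    induction x using TensorProduct.induction_on with
    | zero => erw [mul_zero, map_zero]; simp; rfl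
    | tmul a b =>
        erw [hfiBi, Algebra.TensorProduct.tmul_mul_tmul, one_mul, hπt, hπt, hPm, hQm,
          map_mul, map_mul]
        exact Prod.ext (by dsimp; ring) (by dsimp; ring)
    | add y z hy hz =>
        erw [mul_add, map_add, map_add, hy, hz]
        exact Prod.ext (by simp [mul_add]) (by simp [mul_add])
  -- behaviour of π under left multiplication
  have hπl : ∀ (α : A) (x : RTensor R A A ι ι),
      π ((RTensor.inl R A A ι ι α) * x) = (α * (π x).1, α * (π x).2) := by
    intro α x
    induction x using TensorProduct.induction_on with
    | zero => erw [mul_zero, map_zero]; simp; rfl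
    | tmul a b =>
        erw [hinl1, Algebra.TensorProduct.tmul_mul_tmul, one_mul, hπt, hπt]
        exact Prod.ext (by dsimp; ring) (by dsimp; ring)
    | add y z hy hz =>
        erw [mul_add, map_add, map_add, hy, hz]
        exact Prod.ext (by simp [mul_add]) (by simp [mul_add])
  -- the forward map
  let F : RTensor R (RTensor R A A ι ι) A ((RTensor.inr R A A ι ι).comp ι) ι →+
      RTensor R A A ι ι × RTensor R A A ι ι := TensorProduct.liftAddHom
    (AddMonoidHom.mk' (fun x => AddMonoidHom.mk'
        (fun c => (((π x).1 ⊗ₜ[R] c, (π x).2 ⊗ₜ[R] c) :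
          RTensor R A A ι ι × RTensor R A A ι ι))
        (fun c c' => by
          erw [TensorProduct.tmul_add, TensorProduct.tmul_add, Prod.mk_add_mk]; rfl))
      (fun x x' => AddMonoidHom.ext fun c => by
        simp only [AddMonoidHom.add_apply, AddMonoidHom.mk'_apply]
        erw [map_add, Prod.fst_add, Prod.snd_add, TensorProduct.add_tmul,
          TensorProduct.add_tmul, Prod.mk_add_mk]; rfl))
    (fun r x c => by
      simp only [AddMonoidHom.mk'_apply]
      erw [hsmB, hπs, hsmA]
      exact Prod.ext (by dsimp only; erw [hmulT']) (by dsimp only; erw [hmulT']))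
  have hFt : ∀ (x : RTensor R A A ι ι) (c : A),
      F (x ⊗ₜ[R] c) = ((π x).1 ⊗ₜ[R] c, (π x).2 ⊗ₜ[R] c) :=
    fun x c => TensorProduct.liftAddHom_tmul _ _ x c
  -- the two backward maps
  let G1 : RTensor R A A ι ι →+
      RTensor R (RTensor R A A ι ι) A ((RTensor.inr R A A ι ι).comp ι) ι :=
    TensorProduct.liftAddHom
      (AddMonoidHom.mk' (fun a => AddMonoidHom.mk'
          (fun c => (RTensor.inl R A A ι ι a) ⊗ₜ[R] c)
          (fun c c' => by erw [TensorProduct.tmul_add]; rfl))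
        (fun a a' => AddMonoidHom.ext fun c => by
          show (RTensor.inl R A A ι ι (a + a')) ⊗ₜ[R] c
            = (RTensor.inl R A A ι ι a) ⊗ₜ[R] c + (RTensor.inl R A A ι ι a') ⊗ₜ[R] c
          rw [map_add, TensorProduct.add_tmul]))
      (fun r a c => by
        show (RTensor.inl R A A ι ι (r • a)) ⊗ₜ[R] c = (RTensor.inl R A A ι ι a) ⊗ₜ[R] (r • c)
        rw [hsmA r a, map_mul, hinlr, ← hsmB, TensorProduct.smul_tmul])
  have hG1t : ∀ a c : A, G1 (a ⊗ₜ[R] c) = (RTensor.inl R A A ι ι a) ⊗ₜ[R] c :=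
    fun a c => TensorProduct.liftAddHom_tmul _ _ a c
  let G2 : RTensor R A A ι ι →+
      RTensor R (RTensor R A A ι ι) A ((RTensor.inr R A A ι ι).comp ι) ι :=
    TensorProduct.liftAddHom
      (AddMonoidHom.mk' (fun a => AddMonoidHom.mk'
          (fun c => (RTensor.inl R A A ι ι a * RTensor.inr R A A ι ι f) ⊗ₜ[R] c)
          (fun c c' => by erw [TensorProduct.tmul_add]; rfl))
        (fun a a' => AddMonoidHom.ext fun c => by
          show (RTensor.inl R A A ι ι (a + a') * RTensor.inr R A A ι ι f) ⊗ₜ[R] c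
            = (RTensor.inl R A A ι ι a * RTensor.inr R A A ι ι f) ⊗ₜ[R] c
              + (RTensor.inl R A A ι ι a' * RTensor.inr R A A ι ι f) ⊗ₜ[R] c
          rw [map_add, add_mul, TensorProduct.add_tmul]))
      (fun r a c => by
        show (RTensor.inl R A A ι ι (r • a) * RTensor.inr R A A ι ι f) ⊗ₜ[R] c
          = (RTensor.inl R A A ι ι a * RTensor.inr R A A ι ι f) ⊗ₜ[R] (r • c)
        rw [hsmA r a, map_mul, hinlr, mul_assoc, ← hsmB, TensorProduct.smul_tmul])
  have hG2t : ∀ a c : A,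
      G2 (a ⊗ₜ[R] c) = (RTensor.inl R A A ι ι a * RTensor.inr R A A ι ι f) ⊗ₜ[R] c :=
    fun a c => TensorProduct.liftAddHom_tmul _ _ a c
  let G : RTensor R A A ι ι × RTensor R A A ι ι →+
      RTensor R (RTensor R A A ι ι) A ((RTensor.inr R A A ι ι).comp ι) ι :=
    G1.coprod G2
  have hGp : ∀ y z : RTensor R A A ι ι, G (y, z) = G1 y + G2 z := fun y z => rfl
  -- auxiliary rewrites of the backward generators
  have haux1 : ∀ a b : A, RTensor.inl R A A ι ι (a * ι (P b))
      = (a ⊗ₜ[R] (ι (P b)) : RTensor R A A ι ι) := fun a b => by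
    erw [hinl1, hmulT, mul_one]
  have haux2 : ∀ a b : A, RTensor.inl R A A ι ι (a * ι (Q b)) * RTensor.inr R A A ι ι f
      = (a ⊗ₜ[R] (ι (Q b) * f) : RTensor R A A ι ι) := fun a b => by
    erw [hinl1, hinr1, Algebra.TensorProduct.tmul_mul_tmul, mul_one, one_mul, hmulT]
  -- G ∘ F = id
  have hGF : ∀ x : RTensor R (RTensor R A A ι ι) A ((RTensor.inr R A A ι ι).comp ι) ι,
      G (F x) = x := by
    intro x
    induction x using TensorProduct.induction_on with
    | zero => erw [map_zero]; rfl
    | tmul x c =>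
        erw [hFt, hGp, hG1t, hG2t]
        induction x using TensorProduct.induction_on with
        | zero => erw [map_zero]; simp; erw [add_zero, TensorProduct.zero_tmul]
        | tmul a b =>
            erw [hπt]
            dsimp only
            erw [haux1, haux2, ← TensorProduct.add_tmul, ← TensorProduct.tmul_add, hPQ]
        | add y z hy hz =>
            erw [map_add, Prod.fst_add, Prod.snd_add, map_add, TensorProduct.add_tmul,
              map_add, add_mul, TensorProduct.add_tmul, TensorProduct.add_tmul]
            erw [← hy, ← hz]
            abel
    | add y z hy hz => erw [map_add, map_add, hy, hz]; rfl
  -- F ∘ G = id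
  have hFG1 : ∀ y : RTensor R A A ι ι, F (G1 y) = (y, 0) := by
    intro y
    induction y using TensorProduct.induction_on with
    | zero => erw [map_zero]; rfl
    | tmul a c =>
        erw [hG1t, hFt, hinl1, hπt]
        dsimp only
        erw [hP1, mul_one, hQ1, map_zero, mul_zero, TensorProduct.zero_tmul]
        rfl
    | add y z hy hz =>
        erw [map_add, map_add, hy, hz]
        exact Prod.ext (by simp; rfl) (by simp)
  have hFG2 : ∀ y : RTensor R A A ι ι, F (G2 y) = (0, y) := by
    intro y
    induction y using TensorProduct.induction_on with
    | zero => erw [map_zero]; rfl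
    | tmul a c =>
        erw [hG2t, hFt,
          show RTensor.inl R A A ι ι a * RTensor.inr R A A ι ι f
              = (a ⊗ₜ[R] f : RTensor R A A ι ι) from by
            erw [hinl1, hinr1, Algebra.TensorProduct.tmul_mul_tmul, mul_one, one_mul],
          hπt]
        dsimp only
        erw [hPf, mul_zero, TensorProduct.zero_tmul, hQf, map_one, mul_one]
        rfl
    | add y z hy hz =>
        erw [map_add, map_add, hy, hz]
        exact Prod.ext (by simp) (by simp; rfl)
  have hFG : ∀ y : RTensor R A A ι ι × RTensor R A A ι ι, F (G y) = y := by
    rintro ⟨y, z⟩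
    erw [hGp, map_add, hFG1, hFG2, Prod.mk_add_mk, add_zero, zero_add]
  -- compatibility with the outer (bimodule) actions
  have hinl : ∀ α : A,
      RTensor.inl R (RTensor R A A ι ι) A ((RTensor.inr R A A ι ι).comp ι) ι
        (RTensor.inl R A A ι ι α)
      = ((RTensor.inl R A A ι ι α) ⊗ₜ[R] (1 : A) :
          RTensor R (RTensor R A A ι ι) A ((RTensor.inr R A A ι ι).comp ι) ι) :=
    fun α => rfl
  have hinr : ∀ α : A,
      RTensor.inr R (RTensor R A A ι ι) A ((RTensor.inr R A A ι ι).comp ι) ι α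
      = ((1 : RTensor R A A ι ι) ⊗ₜ[R] α :
          RTensor R (RTensor R A A ι ι) A ((RTensor.inr R A A ι ι).comp ι) ι) :=
    fun α => rfl
  have hL : ∀ (α : A) (x : RTensor R (RTensor R A A ι ι) A ((RTensor.inr R A A ι ι).comp ι) ι),
      F (RTensor.inl R (RTensor R A A ι ι) A ((RTensor.inr R A A ι ι).comp ι) ι
          (RTensor.inl R A A ι ι α) * x)
        = (RTensor.inl R A A ι ι α, RTensor.inl R A A ι ι α) * F x := by
    intro α x
    induction x using TensorProduct.induction_on with
    | zero => erw [mul_zero, map_zero, mul_zero]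
    | tmul x c =>
        letI i1 : Module R (RTensor R A A ι ι) := inferInstance
        letI i2 : SMulCommClass R (RTensor R A A ι ι) (RTensor R A A ι ι) := inferInstance
        letI i3 : IsScalarTower R (RTensor R A A ι ι) (RTensor R A A ι ι) := inferInstance
        erw [hinl, @Algebra.TensorProduct.tmul_mul_tmul R (RTensor R A A ι ι) A _ _ i1 i2 i3 _ _ _ _,
          one_mul, hFt, hFt, hπl,
          Prod.mk_mul_mk, hinl1, Algebra.TensorProduct.tmul_mul_tmul, one_mul,
          Algebra.TensorProduct.tmul_mul_tmul, one_mul]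
        rfl
    | add y z hy hz => erw [mul_add, map_add, map_add, mul_add, hy, hz]
  have hR : ∀ (α : A) (x : RTensor R (RTensor R A A ι ι) A ((RTensor.inr R A A ι ι).comp ι) ι),
      F (x * RTensor.inr R (RTensor R A A ι ι) A ((RTensor.inr R A A ι ι).comp ι) ι α)
        = F x * (RTensor.inr R A A ι ι α, RTensor.inr R A A ι ι α) := by
    intro α x
    induction x using TensorProduct.induction_on with
    | zero => erw [zero_mul, map_zero, zero_mul]
    | tmul x c =>
        letI i1 : Module R (RTensor R A A ι ι) := inferInstance
        letI i2 : SMulCommClass R (RTensor R A A ι ι) (RTensor R A A ι ι) := inferInstance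
        letI i3 : IsScalarTower R (RTensor R A A ι ι) (RTensor R A A ι ι) := inferInstance
        erw [hinr, @Algebra.TensorProduct.tmul_mul_tmul R (RTensor R A A ι ι) A _ _ i1 i2 i3 _ _ _ _,
          mul_one, hFt, hFt,
          Prod.mk_mul_mk, hinr1, Algebra.TensorProduct.tmul_mul_tmul,
          Algebra.TensorProduct.tmul_mul_tmul, mul_one, mul_one]
    | add y z hy hz => erw [add_mul, map_add, map_add, add_mul, hy, hz]
  exact ⟨AddEquiv.mk' ⟨⇑F, ⇑G, hGF, hFG⟩ (fun x y => map_add F x y), hL, hR⟩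

end AbsTL
/-- (0-indexed.)  For `i < n` and `B_i := O(V_i) ⊗_{R_i} O(V_i)`
(`R_i := O(V_i)^{s_i}`) there is an isomorphism of `(O(Z), O(Z))`-bimodules
`O(V_i) ⊗_{R_i} O(V_i) ⊗_{R_i} O(V_i) ≅ B_i ⊕ B_i`,
the `O(Z)`-actions being through `O(Z) → O(V_i)` on the outer factors (this is the
underlying ungraded form of the third Temperley–Lieb relation
`B_i ∗ B_i ≅ B_i ⊕ B_i[−2]`). -/
theorem third_temperley_lieb_relation (i : ℕ) (hi : i < n) :
    letI subi : fixedO k n i →+* O k n (Vi k n i) := (fixedO k n i).subtype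
    -- Bi = O(V_i) ⊗_{R_i} O(V_i)
    letI Bi := RTensor (fixedO k n i) (O k n (Vi k n i)) (O k n (Vi k n i)) subi subi
    letI fiBi : fixedO k n i →+* Bi :=
      (RTensor.inr (fixedO k n i) (O k n (Vi k n i)) (O k n (Vi k n i)) subi subi).comp
        subi
    -- LHS = (O(V_i) ⊗_{R_i} O(V_i)) ⊗_{R_i} O(V_i)
    letI LHS := RTensor (fixedO k n i) Bi (O k n (Vi k n i)) fiBi subi
    letI resi : O k n (ZZ k n) →+* O k n (Vi k n i) := res k n (Vi_subset_ZZ k n i)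
    letI lL : O k n (ZZ k n) →+* LHS :=
      ((RTensor.inl (fixedO k n i) Bi (O k n (Vi k n i)) fiBi subi).comp
        (RTensor.inl (fixedO k n i) (O k n (Vi k n i)) (O k n (Vi k n i)) subi subi)).comp
        resi
    letI rL : O k n (ZZ k n) →+* LHS :=
      (RTensor.inr (fixedO k n i) Bi (O k n (Vi k n i)) fiBi subi).comp resi
    letI lB : O k n (ZZ k n) →+* Bi :=
      (RTensor.inl (fixedO k n i) (O k n (Vi k n i)) (O k n (Vi k n i)) subi subi).comp
        resi
    letI rB : O k n (ZZ k n) →+* Bi :=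
      (RTensor.inr (fixedO k n i) (O k n (Vi k n i)) (O k n (Vi k n i)) subi subi).comp
        resi
    -- RHS = B_i ⊕ B_i, with the componentwise bimodule structure
    letI lR : O k n (ZZ k n) →+* Bi × Bi := RingHom.prod lB lB
    letI rR : O k n (ZZ k n) →+* Bi × Bi := RingHom.prod rB rB
    ∃ e : LHS ≃+ Bi × Bi,
      (∀ (a : O k n (ZZ k n)) (x : LHS), e (lL a * x) = lR a * e x) ∧
      (∀ (a : O k n (ZZ k n)) (x : LHS), e (x * rL a) = e x * rR a) := by
  obtain ⟨e, h1, h2⟩ := abstract_third_rel (fixedO k n i) (O k n (Vi k n i))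
    ((fixedO k n i).subtype) (permO k n (simple n i) (Vi k n i)) (fbar k n (Vi k n i) i)
    (fun r => r.2)
    (fun a ha => ⟨⟨a, ha⟩, rfl⟩)
    (fun a b h => Subtype.ext h)
    (hss_O k n i)
    (hsf_O k n i hi)
    (half_O k n i)
    (hdvd_O k n i hi)
    (hnzd_O k n i hi)
  exact ⟨e, fun a x => h1 _ x, fun a x => h2 _ x⟩

end TLpaper
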